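/- Weak duality for the worst-case 0-1 loss: for every classification rule h ∈ T(X,Y) and every μ ∈ ℝ^m, sup_{p ∈ U} ℓ(h,p) ≤ 1 − τᵀμ + sup_{(x,y) ∈ X×Y} { Φ(x,y)ᵀμ − h(y|x) } + λᵀ|μ|; consequently sup_{p ∈ U} ℓ(h,p) ≤ inf_{μ ∈ ℝ^m} [ 1 − τᵀμ + sup_{(x,y) ∈ X×Y} { Φ(x,y)ᵀμ − h(y|x) } + λᵀ|μ| ]. -/

import Mathlib

open MeasureTheory

noncomputable section

/-- A (randomized) classification rule: for each instance `x` in the Borel set `Xs ⊆ ℝ^d`,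
`h x` is a probability distribution over the labels `Fin K`, measurably in `x`. -/
def IsRule {d K : ℕ} (Xs : Set (Fin d → ℝ)) (h : ↥Xs → Fin K → ℝ) : Prop :=
  (∀ x y, 0 ≤ h x y) ∧ (∀ x, ∑ y, h x y = 1) ∧ ∀ y, Measurable fun x => h x y

/-- Expected 0-1 loss of a rule `h` w.r.t. a distribution `p` on instance-label pairs. -/
def loss {d K : ℕ} {Xs : Set (Fin d → ℝ)} (h : ↥Xs → Fin K → ℝ)
    (p : Measure (↥Xs × Fin K)) : ℝ :=
  ∫ z, (1 - h z.1 z.2) ∂p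

/-- Uncertainty set of distributions with feature expectations within `lam` of `τ`. -/
def Unc {d K m : ℕ} {Xs : Set (Fin d → ℝ)} (Φ : ↥Xs × Fin K → Fin m → ℝ)
    (τ lam : Fin m → ℝ) : Set (Measure (↥Xs × Fin K)) :=
  {p | IsProbabilityMeasure p ∧ ∀ i, |(∫ z, Φ z i ∂p) - τ i| ≤ lam i}

/-- Dual objective `1 - τᵀμ + sup_{(x,y)} {Φ(x,y)ᵀμ - h(y|x)} + λᵀ|μ|`. -/
def Dup {d K m : ℕ} {Xs : Set (Fin d → ℝ)} (Φ : ↥Xs × Fin K → Fin m → ℝ)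
    (τ lam : Fin m → ℝ) (h : ↥Xs → Fin K → ℝ) (μ : Fin m → ℝ) : ℝ :=
  1 - (∑ i, τ i * μ i)
    + (⨆ z : ↥Xs × Fin K, ((∑ i, Φ z i * μ i) - h z.1 z.2))
    + ∑ i, lam i * |μ i|

/-- Weak duality for the worst-case 0-1 loss. -/
theorem stmt_0 {d K m : ℕ} (hK : 0 < K)
    (Xs : Set (Fin d → ℝ)) (hXs : MeasurableSet Xs)
    (Φ : ↥Xs × Fin K → Fin m → ℝ) (hΦmeas : ∀ i, Measurable fun z => Φ z i)
    (B : ℝ) (hΦbdd : ∀ z i, |Φ z i| ≤ B)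
    (τ lam : Fin m → ℝ)
    (h : ↥Xs → Fin K → ℝ) (hrule : IsRule Xs h) :
    (∀ μ : Fin m → ℝ, ∀ p ∈ Unc Φ τ lam, loss h p ≤ Dup Φ τ lam h μ) ∧
    (∀ p ∈ Unc Φ τ lam, loss h p ≤ ⨅ μ : Fin m → ℝ, Dup Φ τ lam h μ) := by
  obtain ⟨hnn, hsum, hmeas⟩ := hrule
  have hb1 : ∀ x y, h x y ≤ 1 := by
    intro x y
    calc h x y ≤ ∑ y', h x y' :=
          Finset.single_le_sum (fun i _ => hnn x i) (Finset.mem_univ y)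
      _ = 1 := hsum x
  have hmeash : Measurable (fun z : ↥Xs × Fin K => h z.1 z.2) := by
    exact measurable_from_prod_countable_left (f := fun z : ↥Xs × Fin K => h z.1 z.2)
      (fun y => (hmeas y).comp measurable_id)
  have main : ∀ μ : Fin m → ℝ, ∀ p ∈ Unc Φ τ lam, loss h p ≤ Dup Φ τ lam h μ := by
    intro μ p hp
    obtain ⟨hprob, hexp⟩ := hp
    haveI := hprob
    have hne : Nonempty (↥Xs × Fin K) := by
      by_contra hc
      rw [not_nonempty_iff] at hc
      have h1 := hprob.measure_univ
      rw [Measure.eq_zero_of_isEmpty p] at h1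
      simp at h1
    set f : ↥Xs × Fin K → ℝ := fun z => (∑ i, Φ z i * μ i) - h z.1 z.2 with hf
    have hfub : ∀ z, f z ≤ ∑ i, B * |μ i| := by
      intro z
      have h1 : f z ≤ ∑ i, Φ z i * μ i := by
        simp only [hf]; linarith [hnn z.1 z.2]
      refine h1.trans (Finset.sum_le_sum fun i _ => ?_)
      calc Φ z i * μ i ≤ |Φ z i * μ i| := le_abs_self _
        _ = |Φ z i| * |μ i| := abs_mul _ _
        _ ≤ B * |μ i| := mul_le_mul_of_nonneg_right (hΦbdd z i) (abs_nonneg _)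
    have hbdd : BddAbove (Set.range f) := ⟨∑ i, B * |μ i|, by rintro _ ⟨z, rfl⟩; exact hfub z⟩
    set S := ⨆ z, f z with hS
    have hfS : ∀ z, f z ≤ S := fun z => le_ciSup hbdd z
    -- integrability
    have hint_h : Integrable (fun z : ↥Xs × Fin K => h z.1 z.2) p := by
      refine ⟨hmeash.aestronglyMeasurable, HasFiniteIntegral.of_bounded (C := 1) ?_⟩
      filter_upwards with z
      rw [Real.norm_eq_abs, abs_le]
      exact ⟨by linarith [hnn z.1 z.2], hb1 z.1 z.2⟩
    have hint_Φ : ∀ i, Integrable (fun z : ↥Xs × Fin K => Φ z i) p := by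
      intro i
      refine ⟨(hΦmeas i).aestronglyMeasurable, HasFiniteIntegral.of_bounded (C := |B|) ?_⟩
      filter_upwards with z
      rw [Real.norm_eq_abs]
      exact (hΦbdd z i).trans (le_abs_self B)
    have hint_g : Integrable (fun z : ↥Xs × Fin K =>
        ∑ i, (τ i - Φ z i) * μ i) p := by
      apply integrable_finset_sum
      intro i _
      exact (((integrable_const (τ i)).sub (hint_Φ i)).mul_const (μ i))
    have hint_one : Integrable (fun z : ↥Xs × Fin K => 1 - h z.1 z.2) p :=
      (integrable_const 1).sub hint_h
    -- pointwise bound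
    have hpw : ∀ z : ↥Xs × Fin K, 1 - h z.1 z.2 ≤
        (1 - (∑ i, τ i * μ i) + S) + ∑ i, (τ i - Φ z i) * μ i := by
      intro z
      have h2 := hfS z
      simp only [hf] at h2
      have h3 : ∑ i, (τ i - Φ z i) * μ i = (∑ i, τ i * μ i) - ∑ i, Φ z i * μ i := by
        rw [← Finset.sum_sub_distrib]
        exact Finset.sum_congr rfl fun i _ => by ring
      rw [h3]; linarith
    have step1 : loss h p ≤ ∫ z, ((1 - (∑ i, τ i * μ i) + S) + ∑ i, (τ i - Φ z i) * μ i) ∂p := by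
      unfold loss
      exact integral_mono hint_one ((integrable_const _).add hint_g) hpw
    have step2 : ∫ z, ((1 - (∑ i, τ i * μ i) + S) + ∑ i, (τ i - Φ z i) * μ i) ∂p
        = (1 - (∑ i, τ i * μ i) + S) + ∑ i, (τ i - ∫ z, Φ z i ∂p) * μ i := by
      rw [integral_add (integrable_const _) hint_g, integral_const]
      simp only [measure_univ, ENNReal.toReal_one, probReal_univ, smul_eq_mul, one_mul]
      congr 1
      rw [integral_finset_sum (f := fun i (z : ↥Xs × Fin K) => (τ i - Φ z i) * μ i) Finset.univ
        (fun i _ => ((integrable_const (τ i)).sub (hint_Φ i)).mul_const (μ i))]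
      refine Finset.sum_congr rfl fun i _ => ?_
      rw [integral_mul_const, integral_sub (integrable_const _) (hint_Φ i), integral_const]
      simp [measure_univ]
    have step3 : ∑ i, (τ i - ∫ z, Φ z i ∂p) * μ i ≤ ∑ i, lam i * |μ i| := by
      refine Finset.sum_le_sum fun i _ => ?_
      calc (τ i - ∫ z, Φ z i ∂p) * μ i ≤ |(τ i - ∫ z, Φ z i ∂p) * μ i| := le_abs_self _
        _ = |τ i - ∫ z, Φ z i ∂p| * |μ i| := abs_mul _ _
        _ ≤ lam i * |μ i| := by
            refine mul_le_mul_of_nonneg_right ?_ (abs_nonneg _)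
            rw [abs_sub_comm]; exact hexp i
    have : loss h p ≤ (1 - (∑ i, τ i * μ i) + S) + ∑ i, lam i * |μ i| := by
      rw [step2] at step1; linarith
    simpa [Dup, hS, hf] using this
  refine ⟨main, fun p hp => le_ciInf fun μ => main μ p hp⟩

end
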